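/- Let a ∈ ℝ^d be a vector such that at least d/2 of the coordinates satisfy |a_i| ≥ ‖a‖₂/(5√d). For t > 0 define K_{1,2}(a,t) = inf{ ‖a'‖₁ + t‖a''‖₂ : a' + a'' = a }. Then there is an absolute constant c > 0 such that for all t < c√d, c·t·‖a‖₂ ≤ K_{1,2}(a,t) ≤ t·‖a‖₂. -/
import Mathlib


open Finset

theorem stmt_6 : ∃ c > 0, ∀ (d : ℕ) (a : Fin d → ℝ), 1 ≤ d → a ≠ 0 →
    (d : ℝ) ≤ 2 * (Finset.univ.filter
        (fun i => Real.sqrt (∑ j, a j ^ 2) / (5 * Real.sqrt d) ≤ |a i|)).card →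
    ∀ t : ℝ, 0 < t → t < c * Real.sqrt d →
      c * t * Real.sqrt (∑ j, a j ^ 2) ≤
        sInf {r : ℝ | ∃ a' a'' : Fin d → ℝ, a' + a'' = a ∧
          r = (∑ i, |a' i|) + t * Real.sqrt (∑ i, a'' i ^ 2)} ∧
      sInf {r : ℝ | ∃ a' a'' : Fin d → ℝ, a' + a'' = a ∧
          r = (∑ i, |a' i|) + t * Real.sqrt (∑ i, a'' i ^ 2)}
        ≤ t * Real.sqrt (∑ j, a j ^ 2) := by
  refine ⟨1/20, by norm_num, ?_⟩
  intro d a hd ha hcard t ht htc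
  set N := Real.sqrt (∑ j, a j ^ 2) with hN
  have hsum : 0 < ∑ j, a j ^ 2 := by
    have hj : ∃ j, a j ≠ 0 := by
      by_contra h; push_neg at h; exact ha (funext h)
    obtain ⟨j, hj⟩ := hj
    have h1 : 0 < a j ^ 2 := by positivity
    exact lt_of_lt_of_le h1 (Finset.single_le_sum (f := fun i => a i ^ 2)
      (fun i _ => sq_nonneg _) (mem_univ j))
  have hNpos : 0 < N := Real.sqrt_pos.mpr hsum
  have hdpos : (0:ℝ) < d := by exact_mod_cast Nat.lt_of_lt_of_le Nat.zero_lt_one hd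
  set sd := Real.sqrt d with hsd
  have hsdpos : 0 < sd := Real.sqrt_pos.mpr hdpos
  have hsdsq : sd ^ 2 = d := Real.sq_sqrt (le_of_lt hdpos)
  have htsd : t ≤ sd := le_of_lt (lt_of_lt_of_le htc (by nlinarith))
  have hmem : t * N ∈ {r : ℝ | ∃ a' a'' : Fin d → ℝ, a' + a'' = a ∧
      r = (∑ i, |a' i|) + t * Real.sqrt (∑ i, a'' i ^ 2)} :=
    ⟨0, a, by simp, by simp [hN]⟩
  have hlb : ∀ r ∈ {r : ℝ | ∃ a' a'' : Fin d → ℝ, a' + a'' = a ∧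
      r = (∑ i, |a' i|) + t * Real.sqrt (∑ i, a'' i ^ 2)}, 1/20 * t * N ≤ r := by
    rintro r ⟨a', a'', heq, rfl⟩
    set S := Finset.univ.filter (fun i => N / (5 * sd) ≤ |a i|) with hS
    set A1 := ∑ i, |a' i| with hA1
    set A2 := Real.sqrt (∑ i, a'' i ^ 2) with hA2
    have hA1nn : 0 ≤ A1 := Finset.sum_nonneg fun i _ => abs_nonneg _
    have hA2nn : 0 ≤ A2 := Real.sqrt_nonneg _
    -- sum over S of |a i| is large
    have h2 : (S.card : ℝ) * (N / (5 * sd)) ≤ ∑ i ∈ S, |a i| := by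
      have := Finset.card_nsmul_le_sum S (fun i => |a i|) (N / (5 * sd))
        (fun i hi => (Finset.mem_filter.mp hi).2)
      simpa [nsmul_eq_mul] using this
    -- triangle inequality
    have h3 : ∑ i ∈ S, |a i| ≤ ∑ i ∈ S, |a' i| + ∑ i ∈ S, |a'' i| := by
      rw [← Finset.sum_add_distrib]
      refine Finset.sum_le_sum fun i _ => ?_
      have : a i = a' i + a'' i := by rw [← heq]; rfl
      rw [this]; exact abs_add_le _ _
    have h4 : ∑ i ∈ S, |a' i| ≤ A1 :=
      Finset.sum_le_sum_of_subset_of_nonneg (Finset.subset_univ S)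
        (fun i _ _ => abs_nonneg _)
    -- Cauchy-Schwarz
    have h5 : ∑ i ∈ S, |a'' i| ≤ sd * A2 := by
      have hcs : (∑ i ∈ S, |a'' i|) ^ 2 ≤ (S.card : ℝ) * ∑ i ∈ S, |a'' i| ^ 2 := by
        exact_mod_cast sq_sum_le_card_mul_sum_sq (s := S) (f := fun i => |a'' i|)
      have hsub : ∑ i ∈ S, |a'' i| ^ 2 ≤ ∑ i, a'' i ^ 2 := by
        calc ∑ i ∈ S, |a'' i| ^ 2 = ∑ i ∈ S, a'' i ^ 2 := by
              refine Finset.sum_congr rfl fun i _ => sq_abs _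
          _ ≤ ∑ i, a'' i ^ 2 := Finset.sum_le_sum_of_subset_of_nonneg
              (Finset.subset_univ S) (fun i _ _ => sq_nonneg _)
      have hcard' : (S.card : ℝ) ≤ d := by
        have := (Finset.card_le_univ S).trans_eq (Fintype.card_fin d)
        exact_mod_cast this
      have hsq : (∑ i ∈ S, |a'' i|) ^ 2 ≤ (sd * A2) ^ 2 := by
        calc (∑ i ∈ S, |a'' i|) ^ 2 ≤ (S.card : ℝ) * ∑ i ∈ S, |a'' i| ^ 2 := hcs
          _ ≤ (d : ℝ) * ∑ i, a'' i ^ 2 := by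
              apply mul_le_mul hcard' hsub (Finset.sum_nonneg fun i _ => sq_nonneg _)
                (le_of_lt hdpos)
          _ = (sd * A2) ^ 2 := by
              rw [mul_pow, hsdsq, hA2, Real.sq_sqrt (Finset.sum_nonneg fun i _ => sq_nonneg _)]
      have hnn : 0 ≤ ∑ i ∈ S, |a'' i| := Finset.sum_nonneg fun i _ => abs_nonneg _
      nlinarith [mul_nonneg hsdpos.le hA2nn]
    have hcardS : (d : ℝ) / 2 ≤ (S.card : ℝ) := by linarith [hcard]
    have hkey : sd * N / 10 ≤ A1 + sd * A2 := by
      have h6 : (d : ℝ) / 2 * (N / (5 * sd)) ≤ (S.card : ℝ) * (N / (5 * sd)) := by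
        apply mul_le_mul_of_nonneg_right hcardS (by positivity)
      have h7 : (d : ℝ) / 2 * (N / (5 * sd)) = sd * N / 10 := by
        rw [← hsdsq]; field_simp; ring
      linarith
    rcases le_or_gt A2 (N / 20) with hc | hc
    · have h8 : sd * A2 ≤ sd * (N / 20) := mul_le_mul_of_nonneg_left hc hsdpos.le
      have h9 : sd * N / 20 ≤ A1 := by linarith
      have h10 : t * N / 20 ≤ sd * N / 20 := by nlinarith [mul_nonneg (sub_nonneg.mpr htsd) hNpos.le]
      have h11 : 0 ≤ t * A2 := mul_nonneg ht.le hA2nn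
      linarith
    · have h8 : t * (N / 20) ≤ t * A2 := mul_le_mul_of_nonneg_left hc.le ht.le
      linarith
  refine ⟨le_csInf ⟨_, hmem⟩ hlb, ?_⟩
  have hbdd : BddBelow {r : ℝ | ∃ a' a'' : Fin d → ℝ, a' + a'' = a ∧
      r = (∑ i, |a' i|) + t * Real.sqrt (∑ i, a'' i ^ 2)} :=
    ⟨1/20 * t * N, fun r hr => hlb r hr⟩
  exact csInf_le hbdd hmem
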